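/- arXiv:1303.6207 — 4 statements merged into one kernel-verified Lean document; each statement's English description precedes it below -/
import Mathlib

section
/- Let A be a unital C*-algebra, let n be a positive natural number, let P be an n×n complex matrix that is positive semidefinite, and let Q be an n×n matrix with entries in A that is positive, i.e. 0 ≤ Q as an element of the C*-algebra of n×n matrices over A. Then the element Σ_{i,j} P i j • Q i j of A (where • denotes the scalar action of ℂ on A) is positive, i.e. 0 ≤ Σ_{i,j} P i j • Q i j in A. -/
open scoped ComplexOrder Matrix

/-- Let `A` be a unital C*-algebra, `n` a positive natural number,
`P` an `n × n` complex positive semidefinite matrix, and `Q` an `n × n` matrix over `A`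
that is positive as an element of the C*-algebra of `n × n` matrices over `A`
(equivalently, `Q = Rᴴ * R` for some matrix `R` over `A`).  Then
`∑ i j, P i j • Q i j` is a positive element of `A`. -/
theorem sum_smul_entries_nonneg_of_posSemidef
    {A : Type*} [CStarAlgebra A] [PartialOrder A] [StarOrderedRing A]
    (n : ℕ) (hn : 0 < n)
    (P : Matrix (Fin n) (Fin n) ℂ) (hP : P.PosSemidef)
    (Q : Matrix (Fin n) (Fin n) A)
    (hQ : ∃ R : Matrix (Fin n) (Fin n) A, Q = Rᴴ * R) :
    0 ≤ ∑ i, ∑ j, P i j • Q i j := by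
  have aux : ∀ v : Fin n → A, 0 ≤ ∑ i, ∑ j, P i j • (star (v i) * v j) := by
    intro v
    obtain ⟨B, hB⟩ : ∃ B : Matrix (Fin n) (Fin n) ℂ, P = Bᴴ * B := by
      classical
      open scoped MatrixOrder Matrix.Norms.L2Operator in
      exact CStarAlgebra.nonneg_iff_eq_star_mul_self.mp hP.nonneg
    have h2 : ∑ i, ∑ j, P i j • (star (v i) * v j)
        = ∑ m, star (∑ i, B m i • v i) * (∑ j, B m j • v j) := by
      subst hB
      simp only [Matrix.mul_apply, Matrix.conjTranspose_apply, Finset.sum_smul,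
        star_sum, Finset.sum_mul, Finset.mul_sum, star_smul, smul_mul_smul_comm,
        RCLike.star_def]
      exact ((Finset.sum_congr rfl fun i _ => Finset.sum_comm).trans
        Finset.sum_comm).trans (Finset.sum_congr rfl fun m _ => Finset.sum_comm)
    rw [h2]
    exact Finset.sum_nonneg fun m _ => star_mul_self_nonneg _
  obtain ⟨R, rfl⟩ := hQ
  have h1 : ∑ i, ∑ j, P i j • (Rᴴ * R) i j
      = ∑ k, ∑ i, ∑ j, P i j • (star (R k i) * R k j) := by
    simp only [Matrix.mul_apply, Matrix.conjTranspose_apply, Finset.smul_sum]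
    exact (Finset.sum_congr rfl fun i _ => Finset.sum_comm).trans Finset.sum_comm
  rw [h1]
  exact Finset.sum_nonneg fun k _ => aux _
end

section
/- Let A be a unital C*-algebra, let n be a positive natural number, let P be an n×n complex matrix that is positive definite, and let Q be an n×n matrix with entries in A that is positive (0 ≤ Q in the C*-algebra of n×n matrices over A). Then there exists a real constant c > 0 such that c • (Σ_i Q i i) ≤ Σ_{i,j} P i j • Q i j in A. -/
open scoped ComplexOrder Matrix

/-- For a positive semidefinite complex matrix `M` and elements `a i` of a C*-algebra,
the combination `∑ i j, M i j • (a i)⋆ (a j)` is nonnegative. -/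
lemma aux_psd_sum_nonneg
    {A : Type*} [CStarAlgebra A] [PartialOrder A] [StarOrderedRing A]
    {n : ℕ} (M : Matrix (Fin n) (Fin n) ℂ) (hM : M.PosSemidef)
    (a : Fin n → A) :
    0 ≤ ∑ i, ∑ j, M i j • (star (a i) * a j) := by
  obtain ⟨S, rfl⟩ : ∃ S : Matrix (Fin n) (Fin n) ℂ, M = Sᴴ * S := by
    open scoped MatrixOrder Matrix.Norms.L2Operator in
    exact CStarAlgebra.nonneg_iff_eq_star_mul_self.mp hM.nonneg
  have expand : ∀ m, star (∑ i, S m i • a i) * (∑ j, S m j • a j)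
      = ∑ i, ∑ j, (star (S m i) * S m j) • (star (a i) * a j) := by
    intro m
    rw [star_sum, Finset.sum_mul]
    refine Finset.sum_congr rfl fun i _ => ?_
    rw [Finset.mul_sum]
    refine Finset.sum_congr rfl fun j _ => ?_
    rw [star_smul, smul_mul_assoc, mul_smul_comm, smul_smul]
  have key : ∑ i, ∑ j, (Sᴴ * S) i j • (star (a i) * a j)
      = ∑ m, star (∑ i, S m i • a i) * (∑ j, S m j • a j) := by
    simp_rw [expand, Matrix.mul_apply, Matrix.conjTranspose_apply, Finset.sum_smul]
    calc ∑ i, ∑ j, ∑ m, (star (S m i) * S m j) • (star (a i) * a j)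
        = ∑ i, ∑ m, ∑ j, (star (S m i) * S m j) • (star (a i) * a j) :=
          Finset.sum_congr rfl fun i _ => Finset.sum_comm
      _ = ∑ m, ∑ i, ∑ j, (star (S m i) * S m j) • (star (a i) * a j) := Finset.sum_comm
  rw [key]
  exact Finset.sum_nonneg fun m _ => star_mul_self_nonneg _

/-- Let `A` be a unital C*-algebra, `n` a positive natural number,
`P` an `n × n` complex positive definite matrix, and `Q` an `n × n` matrix over `A`
that is positive as an element of the C*-algebra of `n × n` matrices over `A`
(equivalently, `Q = Rᴴ * R` for some matrix `R` over `A`).  Then there is a real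
constant `c > 0` with `c • (∑ i, Q i i) ≤ ∑ i j, P i j • Q i j` in `A`. -/
theorem exists_pos_smul_trace_le_sum_smul_entries_of_posDef
    {A : Type*} [CStarAlgebra A] [PartialOrder A] [StarOrderedRing A]
    (n : ℕ) (hn : 0 < n)
    (P : Matrix (Fin n) (Fin n) ℂ) (hP : P.PosDef)
    (Q : Matrix (Fin n) (Fin n) A)
    (hQ : ∃ R : Matrix (Fin n) (Fin n) A, Q = Rᴴ * R) :
    ∃ c : ℝ, 0 < c ∧ c • (∑ i, Q i i) ≤ ∑ i, ∑ j, P i j • Q i j := by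
  obtain ⟨R, rfl⟩ := hQ
  have hne : (Finset.univ : Finset (Fin n)).Nonempty := by
    have : Nonempty (Fin n) := Fin.pos_iff_nonempty.mp hn
    exact Finset.univ_nonempty
  set c : ℝ := Finset.univ.inf' hne hP.1.eigenvalues with hc
  have hcpos : 0 < c := by
    rw [hc, Finset.lt_inf'_iff]
    exact fun i _ => hP.eigenvalues_pos i
  refine ⟨c, hcpos, ?_⟩
  -- the matrix `P - c • 1` is positive semidefinite
  set M : Matrix (Fin n) (Fin n) ℂ := P - (c : ℂ) • 1 with hM
  have hMpsd : M.PosSemidef := by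
    have hspec := hP.1.spectral_theorem
    set U : Matrix (Fin n) (Fin n) ℂ := (Matrix.IsHermitian.eigenvectorUnitary hP.1 :
      Matrix (Fin n) (Fin n) ℂ)
    have hU : U * star U = 1 := Matrix.mem_unitaryGroup_iff.mp
      (Matrix.IsHermitian.eigenvectorUnitary hP.1).2
    have h1 : (1 : Matrix (Fin n) (Fin n) ℂ) = U * (1 : Matrix (Fin n) (Fin n) ℂ) * star U := by
      rw [mul_one, hU]
    have hMeq : M = U * (Matrix.diagonal (fun i => ((hP.1.eigenvalues i : ℂ) - (c : ℂ))))
        * star U := by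
      have hd : Matrix.diagonal (fun i => ((hP.1.eigenvalues i : ℂ) - (c : ℂ)))
          = Matrix.diagonal (RCLike.ofReal ∘ hP.1.eigenvalues)
            - (c : ℂ) • (1 : Matrix (Fin n) (Fin n) ℂ) := by
        ext i j
        rcases eq_or_ne i j with rfl | h
        · simp
        · simp [Matrix.diagonal_apply_ne _ h, Matrix.one_apply_ne h]
      rw [Unitary.conjStarAlgAut_apply] at hspec
      rw [hM, hd, Matrix.mul_sub, Matrix.sub_mul, ← hspec, Matrix.mul_smul, mul_one,
        Matrix.smul_mul, hU]
    rw [hMeq]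
    refine Matrix.PosSemidef.mul_mul_conjTranspose_same ?_ U
    rw [Matrix.posSemidef_diagonal_iff]
    intro i
    rw [← Complex.ofReal_sub]
    rw [Complex.zero_le_real]
    have : c ≤ hP.1.eigenvalues i := Finset.inf'_le _ (Finset.mem_univ i)
    linarith
  -- apply the key lemma
  have key : 0 ≤ ∑ i, ∑ j, M i j • ((Rᴴ * R) i j) := by
    have hQentry : ∀ i j, (Rᴴ * R) i j = ∑ k, star (R k i) * R k j := by
      intro i j
      rw [Matrix.mul_apply]
      rfl
    calc (0 : A) ≤ ∑ k, ∑ i, ∑ j, M i j • (star (R k i) * R k j) :=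
          Finset.sum_nonneg fun k _ => aux_psd_sum_nonneg M hMpsd (fun i => R k i)
      _ = ∑ i, ∑ j, M i j • ((Rᴴ * R) i j) := by
          simp_rw [hQentry, Finset.smul_sum]
          rw [Finset.sum_comm]
          refine Finset.sum_congr rfl fun i _ => ?_
          rw [Finset.sum_comm]
  -- unfold `M` in `key`
  have expand : ∑ i, ∑ j, M i j • ((Rᴴ * R) i j)
      = (∑ i, ∑ j, P i j • (Rᴴ * R) i j) - c • ∑ i, (Rᴴ * R) i i := by
    rw [hM]
    have : ∀ i j, (P - (c : ℂ) • 1) i j • ((Rᴴ * R) i j)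
        = P i j • (Rᴴ * R) i j - ((c : ℂ) * (1 : Matrix (Fin n) (Fin n) ℂ) i j) • (Rᴴ * R) i j := by
      intro i j
      rw [Matrix.sub_apply, Matrix.smul_apply, sub_smul, smul_eq_mul]
    simp_rw [this, Finset.sum_sub_distrib]
    congr 1
    rw [Finset.smul_sum]
    refine Finset.sum_congr rfl fun i _ => ?_
    rw [Finset.sum_eq_single i]
    · rw [Matrix.one_apply_eq, mul_one]
      rw [← Complex.coe_smul]
    · intro j _ hj
      rw [Matrix.one_apply_ne' hj, mul_zero, zero_smul]
    · intro h; exact absurd (Finset.mem_univ i) h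
  rw [expand] at key
  exact sub_nonneg.mp key
end

section
/- Let A be a unital C*-algebra, let n be a positive natural number, let P be an n×n complex matrix that is positive definite, and let Q be an n×n matrix with entries in A that is positive (0 ≤ Q in the C*-algebra of n×n matrices over A). Assume moreover that for some index k the diagonal entry Q k k is invertible in A. Then the element Σ_{i,j} P i j • Q i j is a positive and invertible element of A. -/
open scoped ComplexOrder Matrix

open Finset in
private lemma swap4_aux {A : Type*} [AddCommMonoid A] {n : ℕ}
    (f : Fin n → Fin n → Fin n → Fin n → A) :
    ∑ i, ∑ j, ∑ l, ∑ m, f i j l m = ∑ l, ∑ m, ∑ i, ∑ j, f i j l m := by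
  have h1 : ∀ i, ∑ j, ∑ l, ∑ m, f i j l m = ∑ l, ∑ j, ∑ m, f i j l m :=
    fun i => Finset.sum_comm
  simp_rw [h1]
  rw [Finset.sum_comm]
  refine Finset.sum_congr rfl fun l _ => ?_
  have h2 : ∀ i, ∑ j, ∑ m, f i j l m = ∑ m, ∑ j, f i j l m :=
    fun i => Finset.sum_comm
  simp_rw [h2]
  exact Finset.sum_comm

private lemma sos_key {A : Type*} [CStarAlgebra A] {n : ℕ}
    (B : Matrix (Fin n) (Fin n) ℂ) (R : Matrix (Fin n) (Fin n) A) :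
    ∑ i, ∑ j, (Bᴴ * B) i j • ((Rᴴ * R) i j)
      = ∑ l, ∑ m, star (∑ j, B l j • R m j) * (∑ j, B l j • R m j) := by
  calc ∑ i, ∑ j, (Bᴴ * B) i j • ((Rᴴ * R) i j)
      = ∑ i, ∑ j, ∑ m, ∑ l, (star (B l i) * B l j) • (star (R m i) * R m j) := by
        simp only [Matrix.mul_apply, Matrix.conjTranspose_apply, Finset.sum_smul,
          Finset.smul_sum]
    _ = ∑ m, ∑ l, ∑ i, ∑ j, (star (B l i) * B l j) • (star (R m i) * R m j) :=
        swap4_aux _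
    _ = ∑ l, ∑ m, ∑ i, ∑ j, (star (B l i) * B l j) • (star (R m i) * R m j) :=
        Finset.sum_comm
    _ = ∑ l, ∑ m, star (∑ j, B l j • R m j) * (∑ j, B l j • R m j) := by
        refine Finset.sum_congr rfl fun l _ => Finset.sum_congr rfl fun m _ => ?_
        have h : ∀ i j : Fin n, (star (B l i) * B l j) • (star (R m i) * R m j)
            = (star (B l i) • star (R m i)) * (B l j • R m j) := by
          intro i j
          rw [smul_mul_smul_comm]
        simp_rw [h, ← star_smul]
        rw [← Finset.sum_mul_sum, ← star_sum]

private lemma sos_nonneg {A : Type*} [CStarAlgebra A] [PartialOrder A] [StarOrderedRing A]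
    {n : ℕ} {P : Matrix (Fin n) (Fin n) ℂ} (hP : P.PosSemidef)
    {Q : Matrix (Fin n) (Fin n) A} (hQ : ∃ R : Matrix (Fin n) (Fin n) A, Q = Rᴴ * R) :
    0 ≤ ∑ i, ∑ j, P i j • Q i j := by
  obtain ⟨R, rfl⟩ := hQ
  obtain ⟨B, rfl⟩ : ∃ B : Matrix (Fin n) (Fin n) ℂ, P = Bᴴ * B := by
    open scoped MatrixOrder in
    exact ⟨CFC.sqrt P, by
      rw [← Matrix.star_eq_conjTranspose, (CFC.sqrt_nonneg P).isSelfAdjoint.star_eq,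
        CFC.sqrt_mul_sqrt_self P hP.nonneg]⟩
  rw [sos_key]
  exact Finset.sum_nonneg fun l _ => Finset.sum_nonneg fun m _ => star_mul_self_nonneg _

private lemma exists_eps {n : ℕ} (hn : 0 < n) {P : Matrix (Fin n) (Fin n) ℂ}
    (hP : P.PosDef) : ∃ ε : ℝ, 0 < ε ∧ (P - (ε : ℂ) • 1).PosSemidef := by
  have : Nonempty (Fin n) := Fin.pos_iff_nonempty.mp hn
  obtain ⟨i₀, -, hmin⟩ := Finset.exists_min_image Finset.univ hP.1.eigenvalues
    Finset.univ_nonempty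
  have hst := hP.1.spectral_theorem
  set ε : ℝ := hP.1.eigenvalues i₀ with hεdef
  set U : Matrix (Fin n) (Fin n) ℂ := (hP.1.eigenvectorUnitary : Matrix (Fin n) (Fin n) ℂ)
    with hUdef
  set D : Matrix (Fin n) (Fin n) ℂ := Matrix.diagonal (RCLike.ofReal ∘ hP.1.eigenvalues)
    with hDdef
  refine ⟨ε, hP.eigenvalues_pos i₀, ?_⟩
  have hU : U * star U = 1 := Matrix.mem_unitaryGroup_iff.mp hP.1.eigenvectorUnitary.2
  have h1 : ((ε : ℂ) • (1 : Matrix (Fin n) (Fin n) ℂ)) = U * ((ε : ℂ) • 1) * star U := by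
    rw [Matrix.mul_smul, mul_one, Matrix.smul_mul, hU]
  have hdec : P - (ε : ℂ) • 1 = U * (D - (ε : ℂ) • 1) * star U := by
    rw [mul_sub, sub_mul, ← h1]
    exact congrArg (· - ((ε : ℂ) • 1)) hst
  have hdiag : D - (ε : ℂ) • (1 : Matrix (Fin n) (Fin n) ℂ)
      = Matrix.diagonal (fun i => ((hP.1.eigenvalues i - ε : ℝ) : ℂ)) := by
    ext i j
    by_cases h : i = j <;>
      simp [hDdef, Matrix.diagonal, Matrix.one_apply, h, Function.comp]
  rw [hdec, hdiag, Matrix.star_eq_conjTranspose U]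
  refine Matrix.PosSemidef.mul_mul_conjTranspose_same
    (Matrix.PosSemidef.diagonal ?_) U
  intro i
  simp only [Pi.zero_apply]
  exact_mod_cast sub_nonneg.mpr (hmin i (Finset.mem_univ i))

/-- Let `A` be a unital C*-algebra, `n` a positive natural number,
`P` an `n × n` complex positive definite matrix, and `Q` an `n × n` matrix over `A`
that is positive as an element of the C*-algebra of `n × n` matrices over `A`
(equivalently, `Q = Rᴴ * R` for some matrix `R` over `A`), such that some diagonal
entry `Q k k` is invertible in `A`.  Then `∑ i j, P i j • Q i j` is a positive and
invertible element of `A`. -/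
theorem sum_smul_entries_pos_isUnit_of_posDef
    {A : Type*} [CStarAlgebra A] [PartialOrder A] [StarOrderedRing A]
    (n : ℕ) (hn : 0 < n)
    (P : Matrix (Fin n) (Fin n) ℂ) (hP : P.PosDef)
    (Q : Matrix (Fin n) (Fin n) A)
    (hQ : ∃ R : Matrix (Fin n) (Fin n) A, Q = Rᴴ * R)
    (k : Fin n) (hk : IsUnit (Q k k)) :
    0 ≤ ∑ i, ∑ j, P i j • Q i j ∧ IsUnit (∑ i, ∑ j, P i j • Q i j) := by
  have hQd : ∀ i, 0 ≤ Q i i := by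
    intro i
    obtain ⟨R, hR⟩ := hQ
    rw [hR, Matrix.mul_apply]
    exact Finset.sum_nonneg fun m _ => by
      rw [Matrix.conjTranspose_apply]; exact star_mul_self_nonneg _
  have hS0 : 0 ≤ ∑ i, ∑ j, P i j • Q i j := sos_nonneg hP.posSemidef hQ
  obtain ⟨ε, hε, hPS⟩ := exists_eps hn hP
  have hT : 0 ≤ ∑ i, ∑ j, (P - (ε : ℂ) • 1) i j • Q i j := sos_nonneg hPS hQ
  have hsplit : ∑ i, ∑ j, P i j • Q i j
      = (∑ i, ∑ j, (P - (ε : ℂ) • 1) i j • Q i j) + (ε : ℂ) • ∑ i, Q i i := by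
    have h1 : ∀ i j, P i j • Q i j
        = (P - (ε : ℂ) • 1) i j • Q i j
          + (((ε : ℂ) • (1 : Matrix (Fin n) (Fin n) ℂ)) i j) • Q i j := by
      intro i j
      rw [← add_smul, Matrix.sub_apply, sub_add_cancel]
    simp_rw [h1, Finset.sum_add_distrib]
    congr 1
    rw [Finset.smul_sum]
    refine Finset.sum_congr rfl fun i _ => ?_
    simp [Matrix.smul_apply, Matrix.one_apply, ite_smul, smul_smul,
      Finset.sum_ite_eq' Finset.univ i]
  have hεQ : (0 : ℂ) ≤ (ε : ℂ) := by exact_mod_cast hε.le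
  have hle : (ε : ℂ) • Q k k ≤ ∑ i, ∑ j, P i j • Q i j := by
    rw [hsplit]
    have h2 : ∑ i, Q i i = Q k k + ∑ i ∈ Finset.univ.erase k, Q i i :=
      (Finset.add_sum_erase _ (fun i => Q i i) (Finset.mem_univ k)).symm
    rw [h2, smul_add]
    calc (ε : ℂ) • Q k k
        ≤ (ε : ℂ) • Q k k + ((∑ i, ∑ j, (P - (ε : ℂ) • 1) i j • Q i j)
            + (ε : ℂ) • ∑ i ∈ Finset.univ.erase k, Q i i) :=
          le_add_of_nonneg_right (add_nonneg hT (smul_nonneg hεQ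
            (Finset.sum_nonneg fun i _ => hQd i)))
      _ = (∑ i, ∑ j, (P - (ε : ℂ) • 1) i j • Q i j)
            + ((ε : ℂ) • Q k k + (ε : ℂ) • ∑ i ∈ Finset.univ.erase k, Q i i) := by
          abel
  have hunit : IsUnit ((ε : ℂ) • Q k k) := by
    rw [Algebra.smul_def]
    exact ((isUnit_iff_ne_zero.mpr (by exact_mod_cast hε.ne')).map (algebraMap ℂ A)).mul hk
  exact ⟨hS0, CStarAlgebra.isUnit_of_le _ hle (hunit.isStrictlyPositive (smul_nonneg hεQ (hQd k)))⟩
end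

section
/- Let A be a unital C*-algebra, let n be a positive natural number, and let Q be an n×n matrix with entries in A that is positive (0 ≤ Q in the C*-algebra of n×n matrices over A) and such that the diagonal entry Q k k is invertible in A for some index k. Let H be an n-dimensional complex inner product space with orthonormal basis (ξ_1, …, ξ_n), and let ρ be a positive invertible linear operator on H. Then the element b = Σ_{i,j} ⟪ρ ξ_i, ξ_j⟫ • Q i j of A is positive and invertible, and there exists a real constant c > 0 such that c • (Σ_i Q i i) ≤ b in A. -/
open scoped ComplexOrder Matrix

private lemma key_aux {A : Type*} [CStarAlgebra A] [PartialOrder A] [StarOrderedRing A] {n : ℕ}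
    (m : Matrix (Fin n) (Fin n) ℂ) (hm : m.PosSemidef) (R : Matrix (Fin n) (Fin n) A) :
    0 ≤ ∑ i, ∑ j, m i j • (Rᴴ * R) i j := by
  obtain ⟨s, rfl⟩ : ∃ s : Matrix (Fin n) (Fin n) ℂ, m = sᴴ * s := by
    open scoped MatrixOrder in
    obtain ⟨X, hX, -, hXm⟩ := CFC.exists_sqrt_of_isSelfAdjoint_of_quasispectrumRestricts
      hm.isHermitian (QuasispectrumRestricts.nnreal_of_nonneg hm.nonneg)
    exact ⟨X, by rw [← hXm, ← Matrix.star_eq_conjTranspose, hX.star_eq]⟩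
  have reorder : ∀ (f : Fin n → Fin n → Fin n → Fin n → A),
      ∑ i, ∑ j, ∑ p, ∑ l, f i j p l = ∑ l, ∑ p, ∑ i, ∑ j, f i j p l := by
    intro f
    calc ∑ i, ∑ j, ∑ p, ∑ l, f i j p l
        = ∑ i, ∑ j, ∑ l, ∑ p, f i j p l :=
          Finset.sum_congr rfl fun i _ => Finset.sum_congr rfl fun j _ => Finset.sum_comm
      _ = ∑ i, ∑ l, ∑ j, ∑ p, f i j p l :=
          Finset.sum_congr rfl fun i _ => Finset.sum_comm
      _ = ∑ l, ∑ i, ∑ j, ∑ p, f i j p l := Finset.sum_comm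
      _ = ∑ l, ∑ i, ∑ p, ∑ j, f i j p l :=
          Finset.sum_congr rfl fun l _ => Finset.sum_congr rfl fun i _ => Finset.sum_comm
      _ = ∑ l, ∑ p, ∑ i, ∑ j, f i j p l :=
          Finset.sum_congr rfl fun l _ => Finset.sum_comm
  have hrw : ∑ i, ∑ j, (sᴴ * s) i j • (Rᴴ * R) i j
      = ∑ l, ∑ p, star (∑ j, s l j • R p j) * (∑ j, s l j • R p j) := by
    have h1 : ∀ l p : Fin n, star (∑ j, s l j • R p j) * (∑ j, s l j • R p j)
        = ∑ i, ∑ j, (star (s l i) * s l j) • (star (R p i) * R p j) := by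
      intro l p
      rw [star_sum, Finset.sum_mul_sum]
      simp [star_smul, smul_mul_smul_comm, smul_smul, mul_comm]
    simp only [h1, Matrix.mul_apply, Matrix.conjTranspose_apply, Finset.sum_smul,
      Finset.smul_sum, smul_smul]
    exact reorder fun i j p l => (star (s l i) * s l j) • (star (R p i) * R p j)
  rw [hrw]
  exact Finset.sum_nonneg fun l _ => Finset.sum_nonneg fun p _ => star_mul_self_nonneg _

private lemma op_bound {H : Type*} [NormedAddCommGroup H] [InnerProductSpace ℂ H]
    [FiniteDimensional ℂ H] [Nontrivial H]
    (ρ : H →ₗ[ℂ] H)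
    (hsa : ∀ x y : H, (inner ℂ (ρ x) y : ℂ) = inner ℂ x (ρ y))
    (hpos : ∀ x : H, 0 ≤ (inner ℂ (ρ x) x : ℂ))
    (hbij : Function.Bijective ρ) :
    ∃ c : ℝ, 0 < c ∧ ∀ y : H, c * (inner ℂ y y : ℂ).re ≤ (inner ℂ (ρ y) y : ℂ).re := by
  set T : H →L[ℂ] H := LinearMap.toContinuousLinearMap ρ with hT
  have hTapp : ∀ x, T x = ρ x := fun _ => rfl
  have hsym : (T : H →ₗ[ℂ] H).IsSymmetric := by
    intro x y
    simpa [hTapp] using hsa x y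
  have hTsa : IsSelfAdjoint T := ContinuousLinearMap.isSelfAdjoint_iff_isSymmetric.mpr hsym
  have hTpos : (0 : H →L[ℂ] H) ≤ T := by
    rw [ContinuousLinearMap.nonneg_iff_isPositive]
    refine ⟨hsym, fun x => ?_⟩
    have := hpos x
    rw [Complex.le_def] at this
    simpa [ContinuousLinearMap.reApplyInnerSelf, hTapp] using this.1
  have hTunit : IsUnit T := by
    let e := (LinearEquiv.ofBijective ρ hbij).toContinuousLinearEquiv
    have he : (e : H →L[ℂ] H) = T := by
      ext x; rfl
    exact ⟨⟨T, (e.symm : H →L[ℂ] H),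
      by ext x; simp [← he], by ext x; simp [← he]⟩, rfl⟩
  have hspec : ∀ x ∈ spectrum ℝ T, 0 < x := by
    intro x hx
    have h0 : (0:ℝ) ∉ spectrum ℝ T := by
      rw [spectrum.zero_mem_iff]
      exact not_not.mpr hTunit
    have hnn := spectrum_nonneg_of_nonneg hTpos hx
    exact hnn.lt_of_ne' (fun h => h0 (h ▸ hx))
  obtain ⟨r, hr, hrle⟩ := (CFC.exists_pos_algebraMap_le_iff (a := T) hTsa).mpr hspec
  refine ⟨r, hr, fun y => ?_⟩
  have hle : (0 : H →L[ℂ] H) ≤ T - algebraMap ℝ (H →L[ℂ] H) r := sub_nonneg.mpr hrle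
  rw [ContinuousLinearMap.nonneg_iff_isPositive] at hle
  have h2 := hle.2 y
  rw [ContinuousLinearMap.reApplyInnerSelf] at h2
  have halg : algebraMap ℝ (H →L[ℂ] H) r = r • 1 := Algebra.algebraMap_eq_smul_one r
  rw [halg] at h2
  simp only [ContinuousLinearMap.sub_apply, ContinuousLinearMap.smul_apply,
    ContinuousLinearMap.one_apply, inner_sub_left] at h2
  rw [map_sub, ← Complex.coe_smul, inner_smul_left] at h2
  simp only [RCLike.re_to_complex, Complex.conj_ofReal, Complex.mul_re, Complex.ofReal_re,
    Complex.ofReal_im, zero_mul, sub_zero] at h2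
  have h3 := hTapp y
  rw [h3] at h2
  linarith [h2]

/-- Let `A` be a unital C*-algebra, `n` a positive natural number, and
`Q` an `n × n` matrix over `A` that is positive as an element of the C*-algebra of
`n × n` matrices over `A` (equivalently, `Q = Rᴴ * R` for some `R`), with some diagonal
entry `Q k k` invertible in `A`.  Let `H` be an `n`-dimensional complex inner product
space with orthonormal basis `ξ`, and let `ρ` be a positive invertible operator on `H`.
Then `b = ∑ i j, ⟪ρ (ξ i), ξ j⟫ • Q i j` is a positive invertible element of `A`, and
there is a real constant `c > 0` with `c • (∑ i, Q i i) ≤ b`. -/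
theorem sum_inner_smul_entries_pos_isUnit_and_dominates_trace
    {A : Type*} [CStarAlgebra A] [PartialOrder A] [StarOrderedRing A]
    (n : ℕ) (hn : 0 < n)
    (Q : Matrix (Fin n) (Fin n) A)
    (hQ : ∃ R : Matrix (Fin n) (Fin n) A, Q = Rᴴ * R)
    (k : Fin n) (hk : IsUnit (Q k k))
    {H : Type*} [NormedAddCommGroup H] [InnerProductSpace ℂ H] [FiniteDimensional ℂ H]
    (ξ : OrthonormalBasis (Fin n) ℂ H)
    (ρ : H →ₗ[ℂ] H)
    (hsa : ∀ x y : H, (inner ℂ (ρ x) y : ℂ) = inner ℂ x (ρ y))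
    (hpos : ∀ x : H, 0 ≤ (inner ℂ (ρ x) x : ℂ))
    (hbij : Function.Bijective ρ) :
    0 ≤ ∑ i, ∑ j, (inner ℂ (ρ (ξ i)) (ξ j) : ℂ) • Q i j
      ∧ IsUnit (∑ i, ∑ j, (inner ℂ (ρ (ξ i)) (ξ j) : ℂ) • Q i j)
      ∧ ∃ c : ℝ, 0 < c ∧
          c • (∑ i, Q i i) ≤ ∑ i, ∑ j, (inner ℂ (ρ (ξ i)) (ξ j) : ℂ) • Q i j := by
  obtain ⟨R, rfl⟩ := hQ
  haveI : Nontrivial H := by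
    refine ⟨ξ ⟨0, hn⟩, 0, fun h => ?_⟩
    have := ξ.orthonormal.1 ⟨0, hn⟩
    rw [h] at this
    simpa using this
  obtain ⟨c, hc, hcb⟩ := op_bound ρ hsa hpos hbij
  set M : Matrix (Fin n) (Fin n) ℂ := Matrix.of fun i j => (inner ℂ (ρ (ξ i)) (ξ j) : ℂ) with hMdef
  -- the target element
  set b : A := ∑ i, ∑ j, (inner ℂ (ρ (ξ i)) (ξ j) : ℂ) • (Rᴴ * R) i j with hbdef
  have hbM : b = ∑ i, ∑ j, M i j • (Rᴴ * R) i j := rfl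
  -- Hermitian-ness of M
  have hherm : M.IsHermitian := by
    ext i j
    simp only [Matrix.conjTranspose_apply, hMdef, Matrix.of_apply]
    rw [RCLike.star_def, inner_conj_symm, ← hsa]
  -- quadratic form identities
  have hquadM : ∀ x : Fin n → ℂ,
      dotProduct (star x) (M *ᵥ x)
        = (inner ℂ (ρ (∑ i, x i • ξ i)) (∑ j, x j • ξ j) : ℂ) := by
    intro x
    have hmap : ρ (∑ i, x i • ξ i) = ∑ i, x i • ρ (ξ i) := by
      simp [map_sum, map_smul]
    rw [hmap, sum_inner]
    simp only [inner_smul_left, inner_sum, inner_smul_right, Finset.mul_sum,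
      dotProduct, Matrix.mulVec, Pi.star_apply, RCLike.star_def, hMdef, Matrix.of_apply]
    refine Finset.sum_congr rfl fun i _ => Finset.sum_congr rfl fun j _ => ?_
    ring
  have horto := orthonormal_iff_ite.mp ξ.orthonormal
  have hself : ∀ x : Fin n → ℂ,
      (inner ℂ (∑ i, x i • ξ i) (∑ j, x j • ξ j) : ℂ) = dotProduct (star x) x := by
    intro x
    rw [sum_inner]
    simp only [inner_smul_left, inner_sum, inner_smul_right, horto]
    simp [dotProduct, Finset.mul_sum, mul_ite, mul_one, mul_zero, Finset.sum_ite_eq]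
    exact Finset.sum_congr rfl fun i _ => mul_comm _ _
  have hMpsd : M.PosSemidef := by
    refine Matrix.posSemidef_iff_dotProduct_mulVec.mpr ⟨hherm, fun x => ?_⟩
    rw [hquadM x]
    exact hpos _
  -- M - c • 1 is positive semidefinite
  have hone : ((c:ℂ) • (1 : Matrix (Fin n) (Fin n) ℂ)).IsHermitian := by
    unfold Matrix.IsHermitian
    rw [Matrix.conjTranspose_smul, Matrix.conjTranspose_one, RCLike.star_def, Complex.conj_ofReal]
  have hM1 : (M - (c:ℂ) • 1).PosSemidef := by
    refine Matrix.posSemidef_iff_dotProduct_mulVec.mpr ⟨hherm.sub hone, fun x => ?_⟩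
    have hmv : (M - (c:ℂ) • 1) *ᵥ x = M *ᵥ x - (c:ℂ) • x := by
      rw [Matrix.sub_mulVec, Matrix.smul_mulVec, Matrix.one_mulVec]
    rw [hmv, dotProduct_sub, hquadM x, dotProduct_smul, ← hself x]
    set y := ∑ i, x i • ξ i with hy
    have him : (inner ℂ (ρ y) y : ℂ).im = 0 := by
      have := Complex.le_def.mp (hpos y)
      simpa using this.2.symm
    have hre := hcb y
    rw [Complex.le_def]
    constructor
    · simp only [Complex.zero_re, Complex.sub_re, smul_eq_mul, Complex.mul_re,
        Complex.ofReal_re, Complex.ofReal_im, zero_mul, sub_zero]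
      linarith [hre]
    · have h4 : (inner ℂ y y : ℂ).im = 0 := by
        rw [← RCLike.im_to_complex]
        exact inner_self_im y
      simp [Complex.sub_im, smul_eq_mul, Complex.mul_im, him, h4, ← Complex.ofReal_pow]
  -- the diagonal matrices
  set E : Matrix (Fin n) (Fin n) ℂ := Matrix.diagonal (fun i => if i = k then 1 else 0) with hE
  have hcE_diag : (c:ℂ) • E = Matrix.diagonal (fun i => if i = k then (c:ℂ) else 0) := by
    ext i j
    by_cases h : i = j <;> simp [hE, Matrix.diagonal_apply, h] <;> split <;> simp
  have hcE_psd : ((c:ℂ) • E).PosSemidef := by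
    rw [hcE_diag]
    refine Matrix.PosSemidef.diagonal fun i => ?_
    by_cases h : i = k <;> simp [h, Complex.zero_le_real.mpr hc.le]
  have hME_psd : (M - (c:ℂ) • E).PosSemidef := by
    have hsplit : M - (c:ℂ) • E
        = (M - (c:ℂ) • 1) + Matrix.diagonal (fun i => if i = k then 0 else (c:ℂ)) := by
      ext i j
      by_cases h : i = j
      · subst h
        by_cases h2 : i = k <;>
          simp [hE, Matrix.diagonal_apply, Matrix.one_apply, h2]
      · simp [hE, Matrix.diagonal_apply, Matrix.one_apply, h]
    rw [hsplit]
    refine hM1.add (Matrix.PosSemidef.diagonal fun i => ?_)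
    by_cases h : i = k <;> simp [h, Complex.zero_le_real.mpr hc.le]
  -- evaluation of the pairing with diagonal matrices
  have heval : ∀ d : Fin n → ℂ,
      ∑ i, ∑ j, (Matrix.diagonal d) i j • (Rᴴ * R) i j = ∑ i, d i • (Rᴴ * R) i i := by
    intro d
    refine Finset.sum_congr rfl fun i _ => ?_
    simp [Matrix.diagonal_apply, ite_smul, Finset.sum_ite_eq]
  have hsub : ∀ N P : Matrix (Fin n) (Fin n) ℂ,
      ∑ i, ∑ j, (N - P) i j • (Rᴴ * R) i j
        = (∑ i, ∑ j, N i j • (Rᴴ * R) i j) - ∑ i, ∑ j, P i j • (Rᴴ * R) i j := by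
    intro N P
    simp [Matrix.sub_apply, sub_smul, Finset.sum_sub_distrib]
  -- pairing with c • 1 and c • E
  have h1diag : (c:ℂ) • (1 : Matrix (Fin n) (Fin n) ℂ)
      = Matrix.diagonal (fun _ => (c:ℂ)) := by
    ext i j
    by_cases h : i = j <;> simp [Matrix.one_apply, Matrix.diagonal_apply, h]
  have hpair1 : ∑ i, ∑ j, ((c:ℂ) • (1 : Matrix (Fin n) (Fin n) ℂ)) i j • (Rᴴ * R) i j
      = c • ∑ i, (Rᴴ * R) i i := by
    rw [h1diag, heval, Finset.smul_sum]
    exact Finset.sum_congr rfl fun i _ => (Complex.coe_smul c _)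
  have hpairE : ∑ i, ∑ j, ((c:ℂ) • E) i j • (Rᴴ * R) i j = c • (Rᴴ * R) k k := by
    rw [hcE_diag, heval]
    rw [show (∑ i, (if i = k then (c:ℂ) else 0) • (Rᴴ * R) i i) = (c:ℂ) • (Rᴴ * R) k k by
      simp [ite_smul, Finset.sum_ite_eq']]
    exact Complex.coe_smul c _
  -- main inequalities
  have hb_nonneg : 0 ≤ b := hbM ▸ key_aux M hMpsd R
  have htrace : c • (∑ i, (Rᴴ * R) i i) ≤ b := by
    have := key_aux _ hM1 R
    rw [hsub, hpair1, ← hbM] at this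
    exact sub_nonneg.mp this
  have hQkk_le : c • (Rᴴ * R) k k ≤ b := by
    have := key_aux _ hME_psd R
    rw [hsub, hpairE, ← hbM] at this
    exact sub_nonneg.mp this
  have hQkk_nonneg : 0 ≤ c • (Rᴴ * R) k k := by
    have := key_aux _ hcE_psd R
    rwa [hpairE] at this
  have hQkk_unit : IsUnit (c • (Rᴴ * R) k k) := by
    refine ⟨⟨c • (Rᴴ * R) k k, c⁻¹ • (↑hk.unit⁻¹ : A), ?_, ?_⟩, rfl⟩
    · rw [smul_mul_smul_comm, mul_inv_cancel₀ hc.ne']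
      rw [show (Rᴴ * R) k k * (↑hk.unit⁻¹ : A) = 1 from hk.mul_val_inv]
      simp
    · rw [smul_mul_smul_comm, inv_mul_cancel₀ hc.ne']
      rw [show (↑hk.unit⁻¹ : A) * (Rᴴ * R) k k = 1 from hk.val_inv_mul]
      simp
  have hb_unit : IsUnit b := CStarAlgebra.isUnit_of_le _ hQkk_le ⟨hQkk_nonneg, hQkk_unit⟩
  exact ⟨hb_nonneg, hb_unit, c, hc, htrace⟩
end
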